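/- Define the Kreweras triangle (h_{n,k}) for n ≥ 1 and 1 ≤ k ≤ n by h_{1,1} = 1 and, for n ≥ 2: h_{n,1} = h_{n-1,1} + h_{n-1,2} + ... + h_{n-1,n-1}; h_{n,2} = 2h_{n,1} - h_{n-1,1}; and for 3 ≤ k ≤ n, h_{n,k} = 2h_{n,k-1} - h_{n,k-2} - h_{n-1,k-1} - h_{n-1,k-2}. Then for all n ≥ 1 and all k with 1 ≤ k ≤ n, one has the symmetry h_{n,k} = h_{n,n-k+1}. -/

import Mathlib

open Finset

-- difference formula for a row
lemma kreweras_diff (h : ℕ → ℕ → ℤ)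
    (hrec1 : ∀ n, 2 ≤ n → h n 1 = ∑ i ∈ Finset.Icc 1 (n - 1), h (n - 1) i)
    (hrec2 : ∀ n, 2 ≤ n → h n 2 = 2 * h n 1 - h (n - 1) 1)
    (hreck : ∀ n k, 3 ≤ k → k ≤ n →
      h n k = 2 * h n (k - 1) - h n (k - 2) - h (n - 1) (k - 1) - h (n - 1) (k - 2))
    (n : ℕ) (hn : 2 ≤ n) :
    ∀ j, 1 ≤ j → j + 1 ≤ n →
      h n (j+1) - h n j = (∑ i ∈ Icc 1 (n-1), h (n-1) i)
        - (∑ i ∈ Icc 1 j, h (n-1) i) - (∑ i ∈ Icc 1 (j-1), h (n-1) i) := by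
  intro j hj
  induction j, hj using Nat.le_induction with
  | base =>
    intro _
    have e1 := hrec1 n hn
    have e2 := hrec2 n hn
    simp only [show (1:ℕ) - 1 = 0 from rfl]
    rw [show Icc 1 0 = (∅ : Finset ℕ) by rfl]
    simp only [Finset.sum_empty, Finset.Icc_self, Finset.sum_singleton]
    rw [e2, e1]
    ring
  | succ j hj IHj =>
    intro hjn
    have IH := IHj (by omega)
    have hk := hreck n (j+2) (by omega) (by omega)
    have e1 : j + 2 - 1 = j + 1 := by omega
    have e2 : j + 2 - 2 = j := by omega
    rw [e1, e2] at hk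
    have eT1 : (∑ i ∈ Icc 1 (j+1), h (n-1) i)
        = (∑ i ∈ Icc 1 j, h (n-1) i) + h (n-1) (j+1) := by
      rw [← Finset.sum_Icc_succ_top (by omega : 1 ≤ j + 1)]
    have eT2 : (∑ i ∈ Icc 1 j, h (n-1) i)
        = (∑ i ∈ Icc 1 (j-1), h (n-1) i) + h (n-1) j := by
      have hj' : j - 1 + 1 = j := by omega
      conv_lhs => rw [← hj']
      rw [Finset.sum_Icc_succ_top (by omega : 1 ≤ j - 1 + 1), hj']
    have e3 : (j + 1) - 1 = j := by omega
    rw [e3]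
    linarith [IH, hk, eT1, eT2]

theorem kreweras_symmetry (h : ℕ → ℕ → ℤ)
    (h11 : h 1 1 = 1)
    (hrec1 : ∀ n, 2 ≤ n → h n 1 = ∑ i ∈ Finset.Icc 1 (n - 1), h (n - 1) i)
    (hrec2 : ∀ n, 2 ≤ n → h n 2 = 2 * h n 1 - h (n - 1) 1)
    (hreck : ∀ n k, 3 ≤ k → k ≤ n →
      h n k = 2 * h n (k - 1) - h n (k - 2) - h (n - 1) (k - 1) - h (n - 1) (k - 2)) :
    ∀ n k, 1 ≤ n → 1 ≤ k → k ≤ n → h n k = h n (n - k + 1) := by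
  intro n
  induction n using Nat.strong_induction_on with
  | _ n IH =>
  intro k hn1 hk1 hkn
  rcases eq_or_lt_of_le hn1 with h1 | hn2
  · have hk : k = 1 := le_antisymm (h1 ▸ hkn) hk1
    subst hk
    rw [← h1]
  · have hn2 : 2 ≤ n := hn2
    -- symmetry of previous row
    have hsymPrev : ∀ i, 1 ≤ i → i ≤ n - 1 → h (n-1) i = h (n-1) (n - i) := by
      intro i hi1 hi2
      have := IH (n-1) (by omega) i (by omega) hi1 hi2
      have e : n - 1 - i + 1 = n - i := by omega
      rwa [e] at this
    -- reflection of partial sums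
    have hTrefl : ∀ j, j ≤ n - 1 →
        (∑ i ∈ Icc 1 j, h (n-1) i) + (∑ i ∈ Icc 1 (n-1-j), h (n-1) i)
          = ∑ i ∈ Icc 1 (n-1), h (n-1) i := by
      intro j hjn
      have hre : (∑ i ∈ Icc 1 (n-1-j), h (n-1) i)
          = ∑ i ∈ Icc (j+1) (n-1), h (n-1) i := by
        apply Finset.sum_nbij' (i := fun a => n - a) (j := fun a => n - a)
        · intro a ha
          simp only [Finset.mem_Icc] at ha ⊢
          omega
        · intro a ha
          simp only [Finset.mem_Icc] at ha ⊢
          omega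
        · intro a ha
          simp only [Finset.mem_Icc] at ha
          omega
        · intro a ha
          simp only [Finset.mem_Icc] at ha
          omega
        · intro a ha
          simp only [Finset.mem_Icc] at ha
          exact hsymPrev a (by omega) (by omega)
      rw [hre]
      have h1 : Icc 1 j = Ioc 0 j := by rw [← Finset.Icc_add_one_left_eq_Ioc, zero_add]
      have h2 : Icc (j+1) (n-1) = Ioc j (n-1) := by rw [← Finset.Icc_add_one_left_eq_Ioc]
      have h3 : Icc 1 (n-1) = Ioc 0 (n-1) := by rw [← Finset.Icc_add_one_left_eq_Ioc, zero_add]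
      rw [h1, h2, h3]
      exact Finset.sum_Ioc_consecutive _ (by omega) (by omega)
    have hdiff := kreweras_diff h hrec1 hrec2 hreck n hn2
    -- antisymmetry of differences
    have hanti : ∀ j, 1 ≤ j → j + 1 ≤ n →
        (h n (j+1) - h n j) + (h n (n-j+1) - h n (n-j)) = 0 := by
      intro j hj1 hjn
      have d1 := hdiff j hj1 hjn
      have d2 := hdiff (n-j) (by omega) (by omega)
      have e1 : n - j + 1 = n - j + 1 := rfl
      have r1 := hTrefl (j-1) (by omega)
      have r2 := hTrefl j (by omega)
      have e2 : n - 1 - (j-1) = n - j := by omega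
      have e3 : n - 1 - j = n - j - 1 := by omega
      rw [e2] at r1
      rw [e3] at r2
      linarith [d1, d2, r1, r2]
    -- inward telescoping
    have main : ∀ m, ∀ k, 1 ≤ k → 2*k + m = n + 1 → h n k = h n (k + m) := by
      intro m
      induction m using Nat.strong_induction_on with
      | _ m IHm =>
      intro k hk1 hkm
      match m, hkm with
      | 0, hkm => simp
      | 1, hkm =>
        have ha := hanti k hk1 (by omega)
        have e1 : n - k = k := by omega
        rw [e1] at ha
        linarith
      | (m+2), hkm =>
        have hstep := IHm m (by omega) (k+1) (by omega) (by omega)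
        have ha := hanti k hk1 (by omega)
        have e1 : n - k = k + m + 1 := by omega
        rw [e1] at ha
        have e5 : k + m + 1 + 1 = k + (m + 2) := by omega
        rw [e5] at ha
        have e6 : k + m + 1 = k + 1 + m := by omega
        rw [e6] at ha
        linarith
    rcases le_or_gt (2*k) (n+1) with hle | hgt
    · have := main (n+1-2*k) k hk1 (by omega)
      have e : k + (n+1-2*k) = n - k + 1 := by omega
      rwa [e] at this
    · have := main (n+1-2*(n-k+1)) (n-k+1) (by omega) (by omega)
      have e : n - k + 1 + (n+1-2*(n-k+1)) = k := by omega
      rw [e] at this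
      exact this.symm
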